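/- Let V be a finite nonempty set, c : P_V → ℝ, x̂ ∈ X̂_V and U ⊆ V with x̂^{-1}(1) ∩ δ(U, V\U) = ∅. If c_{ij} ≤ 0 for every ij ∈ δ(U, V\U) \ x̂^{-1}(0), then there exists a maximizer x* of φ_c over X_V[x̂] such that x*_{ij} = 0 for all ij ∈ δ(U, V\U) \ x̂^{-1}(0). -/

import Mathlib

open scoped Classical

/-- The set of ordered pairs of distinct elements of `V`. -/
def PV (V : Type*) : Set (V × V) := {pq | pq.1 ≠ pq.2}

/-- Characteristic functions of preorders on `V`: values in `{0,1}` on pairs of distinct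
elements, value `1` on the diagonal (by convention), and the transitivity inequalities. -/
def XV (V : Type*) : Set (V × V → ℝ) :=
  {x | (∀ a : V, x (a, a) = 1) ∧
       (∀ pq : V × V, pq.1 ≠ pq.2 → x pq = 0 ∨ x pq = 1) ∧
       (∀ p q r : V, p ≠ q → p ≠ r → q ≠ r → x (p, q) + x (q, r) - x (p, r) ≤ 1)}

/-- Completions of the partial characteristic function with `x̃⁻¹(0) = E0` and `x̃⁻¹(1) = E1`. -/
def completions {V : Type*} (E0 E1 : Set (V × V)) : Set (V × V → ℝ) :=
  {x | x ∈ XV V ∧ (∀ e ∈ E0, x e = 0) ∧ (∀ e ∈ E1, x e = 1)}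

/-- There is a (possibly trivial) directed path from `p` to `q` in the digraph `(V, E)`. -/
def reach {V : Type*} (E : Set (V × V)) (p q : V) : Prop :=
  Relation.ReflTransGen (fun a b => (a, b) ∈ E) p q

/-- Transitive closure of an edge set. -/
def tc {V : Type*} (E : Set (V × V)) : Set (V × V) :=
  {pq | pq ∈ PV V ∧ reach E pq.1 pq.2}

/-- A pair is decided by the partial characteristic function `(E0, E1)`. -/
def decidedPair {V : Type*} (E0 E1 : Set (V × V)) (pq : V × V) : Prop :=
  ∀ x ∈ completions E0 E1, ∀ x' ∈ completions E0 E1, x pq = x' pq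

/-- The partial characteristic function `(E0, E1)` is maximally specific. -/
def maxSpecific {V : Type*} (E0 E1 : Set (V × V)) : Prop :=
  {pq | pq ∈ PV V ∧ decidedPair E0 E1 pq} = E0 ∪ E1

/-- Objective function of the preordering problem. -/
noncomputable def phi {V : Type*} [Fintype V] (c x : V × V → ℝ) : ℝ :=
  ∑ pq ∈ Finset.univ.filter (fun pq : V × V => pq.1 ≠ pq.2), c pq * x pq

/-- `δ(U, V \ U)`. -/
def dicut {V : Type*} (U : Set V) : Set (V × V) := {pq | pq.1 ∈ U ∧ pq.2 ∉ U}

/-- Elementary dicut map. -/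
noncomputable def sigmaCut {V : Type*} (U : Set V) (x : V × V → ℝ) : V × V → ℝ :=
  fun pq => if pq.1 ∈ U ∧ pq.2 ∉ U then 0 else x pq

/-- Elementary join map. -/
noncomputable def sigmaJoin {V : Type*} (i j : V) (x : V × V → ℝ) : V × V → ℝ :=
  fun pq => if x (pq.1, i) = 1 ∧ x (j, pq.2) = 1 then 1 else x pq

/-- `P_{ab}[σ]`: pairs whose value can change from `a` to `b` under `σ`. -/
def Pmove {V : Type*} (E0 E1 : Set (V × V)) (σ : (V × V → ℝ) → (V × V → ℝ)) (a b : ℝ) :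
    Set (V × V) :=
  {e | e ∈ PV V ∧ ∃ x ∈ completions E0 E1, x e = a ∧ σ x e = b}

/-- Restriction of a set of pairs to `U × U`. -/
def resSet {V : Type*} (U : Set V) (E : Set (V × V)) : Set (↥U × ↥U) :=
  {pq | ((pq.1 : V), (pq.2 : V)) ∈ E}

/-- Directed cut condition (Corollary 7 of the paper). -/
theorem stmt10 {V : Type*} [Fintype V] [Nonempty V]
    (E0 E1 : Set (V × V)) (hE0 : E0 ⊆ PV V) (hE1 : E1 ⊆ PV V)
    (hdisj : Disjoint E0 E1)
    (hne : (completions E0 E1).Nonempty)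
    (hms : maxSpecific E0 E1)
    (c : V × V → ℝ) (U : Set V)
    (hcut : E1 ∩ dicut U = ∅)
    (hcond : ∀ pq ∈ dicut U \ E0, c pq ≤ 0) :
    ∃ xs ∈ completions E0 E1,
      (∀ x ∈ completions E0 E1, phi c x ≤ phi c xs) ∧
      ∀ pq ∈ dicut U \ E0, xs pq = 0 := by
  classical
  -- completions is finite
  have hfin : (completions E0 E1).Finite := by
    apply Set.Finite.subset (Set.finite_range
      (fun f : V × V → Bool => fun pq => if f pq then (1:ℝ) else 0))
    intro x hx
    refine ⟨fun pq => decide (x pq = 1), ?_⟩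
    funext pq
    by_cases hd : pq.1 = pq.2
    · have : x pq = 1 := by
        have := hx.1.1 pq.1
        rw [show pq = (pq.1, pq.2) from rfl, ← hd] at *
        simpa using this
      simp [this]
    · rcases hx.1.2.1 pq hd with h | h <;> simp [h]
  -- maximizer exists
  obtain ⟨x, hx, hmax⟩ := Set.Finite.exists_maximalFor (phi c) _ hfin hne
  have hmax' : ∀ y ∈ completions E0 E1, phi c y ≤ phi c x := by
    intro y hy
    by_contra h
    push_neg at h
    exact absurd (hmax hy h.le) (not_le.mpr h)
  set xs := sigmaCut U x with hxs
  have hmem : xs ∈ completions E0 E1 := by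
    obtain ⟨⟨hdiag, h01, htr⟩, h0, h1⟩ := hx
    refine ⟨⟨?_, ?_, ?_⟩, ?_, ?_⟩
    · intro a
      simp only [hxs, sigmaCut]
      rw [if_neg (by tauto)]
      exact hdiag a
    · intro pq hd
      simp only [hxs, sigmaCut]
      split
      · exact Or.inl rfl
      · exact h01 pq hd
    · intro p q r hpq hpr hqr
      have hge : ∀ a b : V, a ≠ b → 0 ≤ x (a, b) := fun a b hab => by
        rcases h01 (a, b) hab with h | h <;> simp [h]
      have hle : ∀ a b : V, a ≠ b → x (a, b) ≤ 1 := fun a b hab => by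
        rcases h01 (a, b) hab with h | h <;> simp [h]
      have key := htr p q r hpq hpr hqr
      simp only [hxs, sigmaCut]
      by_cases hPR : p ∈ U ∧ r ∉ U
      · rw [if_pos hPR]
        by_cases hqU : q ∈ U
        · rw [if_neg (fun h => h.2 hqU), if_pos ⟨hqU, hPR.2⟩]
          have := hle p q hpq; linarith
        · rw [if_pos ⟨hPR.1, hqU⟩]
          split
          · linarith
          · have := hle q r hqr; linarith
      · rw [if_neg hPR]
        have g1 := hge p q hpq
        have g2 := hge q r hqr
        have g3 := hge p r hpr
        split <;> split <;> linarith
    · intro e he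
      simp only [hxs, sigmaCut]
      split
      · rfl
      · exact h0 e he
    · intro e he
      simp only [hxs, sigmaCut]
      rw [if_neg]
      · exact h1 e he
      · intro hd
        have : e ∈ E1 ∩ dicut U := ⟨he, hd⟩
        rw [hcut] at this
        exact this
  refine ⟨xs, hmem, ?_, ?_⟩
  · intro y hy
    refine le_trans (hmax' y hy) ?_
    -- phi c x ≤ phi c xs
    unfold phi
    apply Finset.sum_le_sum
    intro pq hpq
    simp only [Finset.mem_filter] at hpq
    by_cases hd : pq.1 ∈ U ∧ pq.2 ∉ U
    · simp only [hxs, sigmaCut, if_pos hd, mul_zero]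
      by_cases he0 : pq ∈ E0
      · rw [hx.2.1 pq he0, mul_zero]
      · have hc := hcond pq ⟨hd, he0⟩
        have hx0 : 0 ≤ x pq := by
          rcases hx.1.2.1 pq hpq.2 with h | h <;> simp [h]
        exact mul_nonpos_of_nonpos_of_nonneg hc hx0
    · simp only [hxs, sigmaCut, if_neg hd, le_refl]
  · intro pq hpq
    simp only [hxs, sigmaCut]
    exact if_pos ⟨hpq.1.1, hpq.1.2⟩
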